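/- (Stable Poincaré polynomial of the colored Hopf link) Fix j ∈ ℕ. There exists an element P ∈ ℚ(q)[a^{±1}, s^{±1}, t] such that for all natural numbers N ≥ i ≥ j, substituting a = q^N and s = q^{i-j} into P yields Σ_{k=0}^{j} t^{2k} · q^{k(2+N)} · [N-i choose k]_q · [i choose j-k]_q, the Poincaré polynomial of Λ^i-reduced sl_N homology of the (Λ^i, Λ^j)-colored Hopf link. -/

import Mathlib

open Finset

/-- The field ℚ(q) of rational functions over ℚ. -/
noncomputable abbrev F : Type := RatFunc ℚ

/-- The variable q of ℚ(q). -/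
noncomputable def q : F := RatFunc.X

/-- The quantum integer [m] := (q^m - q^{-m})/(q - q^{-1}) ∈ ℚ(q). -/
noncomputable def qint (m : ℤ) : F := (q ^ m - q ^ (-m)) / (q - q⁻¹)

/-- The quantum factorial [n]! := [1][2]⋯[n]. -/
noncomputable def qfac (n : ℕ) : F := ∏ k ∈ range n, qint ((k : ℤ) + 1)

/-- The balanced quantum binomial [h choose c]_q, zero when c > h. -/
noncomputable def qbinom (h c : ℕ) : F :=
  if c ≤ h then qfac h / (qfac c * qfac (h - c)) else 0

lemma q_ne_zero : q ≠ 0 := RatFunc.X_ne_zero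

lemma q_pow_ne_one {n : ℕ} (hn : n ≠ 0) : q ^ n ≠ 1 := by
  intro h
  have h2 : algebraMap (Polynomial ℚ) F (Polynomial.X ^ n) = algebraMap (Polynomial ℚ) F 1 := by
    rw [map_pow, map_one, RatFunc.algebraMap_X]
    exact h
  have h3 := RatFunc.algebraMap_injective ℚ h2
  have := congrArg (Polynomial.eval 0) h3
  simp [zero_pow hn] at this

lemma q_sub_inv_ne_zero : q - q⁻¹ ≠ 0 := by
  intro h
  have hq : q = q⁻¹ := sub_eq_zero.mp h
  have : q ^ 2 = 1 := by
    rw [sq]; nth_rewrite 2 [hq]; exact mul_inv_cancel₀ q_ne_zero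
  exact q_pow_ne_one (by norm_num) this

lemma qint_ne_zero {m : ℤ} (hm : 0 < m) : qint m ≠ 0 := by
  have hnum : q ^ m - q ^ (-m) ≠ 0 := by
    intro h
    have hq : q ^ m = q ^ (-m) := sub_eq_zero.mp h
    have h2 : q ^ (2 * m) = 1 := by
      rw [two_mul, zpow_add₀ q_ne_zero]
      nth_rewrite 2 [hq]
      rw [← zpow_add₀ q_ne_zero]
      simp
    have : q ^ ((2 * m).toNat) = 1 := by
      rw [← zpow_natCast, Int.toNat_of_nonneg (by omega)]; exact h2
    exact q_pow_ne_one (by omega) this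
  exact div_ne_zero hnum q_sub_inv_ne_zero

lemma qfac_ne_zero (n : ℕ) : qfac n ≠ 0 := by
  refine Finset.prod_ne_zero_iff.mpr fun k _ => qint_ne_zero (by positivity)

lemma prod_qint (h : ℕ) : ∀ c : ℕ, c ≤ h →
    (∏ l ∈ range c, qint ((h : ℤ) - l)) * qfac (h - c) = qfac h := by
  intro c
  induction c with
  | zero => simp
  | succ c ih =>
    intro hch
    rw [prod_range_succ]
    have h1 : h - c = (h - (c + 1)) + 1 := by omega
    have h2 : qfac (h - c) = qfac (h - (c + 1)) * qint ((h : ℤ) - c) := by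
      rw [h1, qfac, prod_range_succ, ← qfac]
      congr 1
      have : ((h - (c + 1) : ℕ) : ℤ) = (h : ℤ) - (c + 1) := by omega
      rw [this]; ring
    have h3 := ih (by omega)
    rw [h2] at h3
    rw [← h3]; ring

lemma qbinom_prod (h c : ℕ) :
    qbinom h c = (∏ l ∈ range c, qint ((h : ℤ) - l)) / qfac c := by
  by_cases hch : c ≤ h
  · rw [qbinom, if_pos hch, ← prod_qint h c hch]
    have h1 := qfac_ne_zero c
    have h2 := qfac_ne_zero (h - c)
    field_simp
  · rw [qbinom, if_neg hch]
    have : (∏ l ∈ range c, qint ((h : ℤ) - l)) = 0 := by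
      apply Finset.prod_eq_zero (Finset.mem_range.mpr (by omega : h < c))
      simp [qint]
    rw [this, zero_div]

section Eval

noncomputable def expHom (N d : ℤ) : Multiplicative (ℤ × ℤ) →* Polynomial F where
  toFun m := Polynomial.C (q ^ (N * (Multiplicative.toAdd m).1 + d * (Multiplicative.toAdd m).2))
  map_one' := by simp
  map_mul' x y := by
    simp only [toAdd_mul, Prod.fst_add, Prod.snd_add]
    rw [show N * ((Multiplicative.toAdd x).1 + (Multiplicative.toAdd y).1)
        + d * ((Multiplicative.toAdd x).2 + (Multiplicative.toAdd y).2)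
      = (N * (Multiplicative.toAdd x).1 + d * (Multiplicative.toAdd x).2)
        + (N * (Multiplicative.toAdd y).1 + d * (Multiplicative.toAdd y).2) by ring,
      zpow_add₀ q_ne_zero, map_mul]

noncomputable def ev (N d : ℤ) : AddMonoidAlgebra (Polynomial F) (ℤ × ℤ) →+* Polynomial F :=
  AddMonoidAlgebra.liftNCRingHom (RingHom.id _) (expHom N d) fun _ _ => Commute.all _ _

lemma ev_single (N d : ℤ) (m : ℤ × ℤ) (p : Polynomial F) :
    ev N d (AddMonoidAlgebra.single m p) = Polynomial.C (q ^ (N * m.1 + d * m.2)) * p := by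
  have h : ev N d (AddMonoidAlgebra.single m p)
      = AddMonoidAlgebra.liftNC ((RingHom.id (Polynomial F)) : Polynomial F →+ Polynomial F)
          (⇑(expHom N d)) (AddMonoidAlgebra.single m p) := rfl
  rw [h, AddMonoidAlgebra.liftNC_single]
  simp [expHom, mul_comm]

lemma ev_apply (N d : ℤ) (φ : AddMonoidAlgebra (Polynomial F) (ℤ × ℤ)) :
    ev N d φ = φ.coeff.sum fun m c => Polynomial.C (q ^ (N * m.1 + d * m.2)) * c := by
  conv_lhs => rw [← AddMonoidAlgebra.sum_single φ, map_finsuppSum]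
  exact Finsupp.sum_congr fun m _ => ev_single N d m _

noncomputable def uu (m : ℤ × ℤ) : AddMonoidAlgebra (Polynomial F) (ℤ × ℤ) :=
  AddMonoidAlgebra.single m 1

noncomputable def cst (v : F) : AddMonoidAlgebra (Polynomial F) (ℤ × ℤ) :=
  AddMonoidAlgebra.single 0 (Polynomial.C v)

noncomputable def tA : AddMonoidAlgebra (Polynomial F) (ℤ × ℤ) :=
  AddMonoidAlgebra.single 0 Polynomial.X

lemma ev_uu (N d : ℤ) (m : ℤ × ℤ) : ev N d (uu m) = Polynomial.C (q ^ (N * m.1 + d * m.2)) := by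
  rw [uu, ev_single, mul_one]

lemma ev_cst (N d : ℤ) (v : F) : ev N d (cst v) = Polynomial.C v := by
  rw [cst, ev_single]; simp

lemma ev_tA (N d : ℤ) : ev N d tA = Polynomial.X := by
  rw [tA, ev_single]; simp

end Eval

/-- Stable Poincaré polynomial of the colored Hopf link.  An element
P ∈ ℚ(q)[a^{±1}, s^{±1}, t] is encoded as a finitely supported family of
polynomials in t (Laurent exponents of a and s indexed by ℤ × ℤ); substituting
a = q^N and s = q^{i-j} means summing the coefficient polynomials weighted by
q^{N·m₁ + (i-j)·m₂}.  The theorem asserts the existence of such a P whose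
specialization at every N ≥ i ≥ j equals
Σ_{k=0}^{j} t^{2k}·q^{k(2+N)}·[N-i choose k]_q·[i choose j-k]_q,
the Poincaré polynomial of Λ^i-reduced sl_N homology of the (Λ^i,Λ^j)-colored
Hopf link. -/
theorem hopf_stable_poincare (j : ℕ) :
    ∃ P : (ℤ × ℤ) →₀ Polynomial F,
      ∀ N i : ℕ, j ≤ i → i ≤ N →
        (P.sum fun m c =>
            Polynomial.C (q ^ ((N : ℤ) * m.1 + ((i : ℤ) - (j : ℤ)) * m.2)) * c) =
          ∑ k ∈ range (j + 1),
            Polynomial.X ^ (2 * k) *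
              Polynomial.C (q ^ (k * (2 + N)) * qbinom (N - i) k * qbinom i (j - k)) := by
  refine ⟨AddMonoidAlgebra.coeff <| ∑ k ∈ range (j + 1),
      cst (q ^ (2 * k) * (qfac k * qfac (j - k))⁻¹)
        * uu ((k : ℤ), 0)
        * (∏ l ∈ range k, cst (q - q⁻¹)⁻¹ *
            (uu (1, -1) * cst (q ^ (-(j : ℤ) - l)) - uu (-1, 1) * cst (q ^ ((j : ℤ) + l))))
        * (∏ l ∈ range (j - k), cst (q - q⁻¹)⁻¹ *
            (uu (0, 1) * cst (q ^ ((j : ℤ) - l)) - uu (0, -1) * cst (q ^ ((l : ℤ) - j))))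
        * tA ^ (2 * k), ?_⟩
  intro N i hji hiN
  rw [← ev_apply (N : ℤ) ((i : ℤ) - (j : ℤ)), map_sum]
  refine Finset.sum_congr rfl fun k hk => ?_
  have hkj : k ≤ j := Nat.lt_succ_iff.mp (Finset.mem_range.mp hk)
  simp only [map_mul, map_pow, map_prod, map_sub, ev_uu, ev_cst, ev_tA]
  simp only [← Polynomial.C_sub, ← Polynomial.C_mul, ← Polynomial.C_pow, ← map_prod]
  rw [mul_comm]
  congr 1
  have e1 : ∀ l ∈ range k,
      (q - q⁻¹)⁻¹ *
        (q ^ ((N : ℤ) * 1 + ((i : ℤ) - (j : ℤ)) * (-1)) * q ^ (-(j : ℤ) - l)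
          - q ^ ((N : ℤ) * (-1) + ((i : ℤ) - (j : ℤ)) * 1) * q ^ ((j : ℤ) + l))
        = qint (((N - i : ℕ) : ℤ) - l) := by
    intro l _
    rw [qint, div_eq_inv_mul, ← zpow_add₀ q_ne_zero, ← zpow_add₀ q_ne_zero,
      show (N : ℤ) * 1 + ((i : ℤ) - (j : ℤ)) * (-1) + (-(j : ℤ) - l)
        = ((N - i : ℕ) : ℤ) - l by omega,
      show (N : ℤ) * (-1) + ((i : ℤ) - (j : ℤ)) * 1 + ((j : ℤ) + l)
        = -(((N - i : ℕ) : ℤ) - l) by omega]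
  have e2 : ∀ l ∈ range (j - k),
      (q - q⁻¹)⁻¹ *
        (q ^ ((N : ℤ) * 0 + ((i : ℤ) - (j : ℤ)) * 1) * q ^ ((j : ℤ) - l)
          - q ^ ((N : ℤ) * 0 + ((i : ℤ) - (j : ℤ)) * (-1)) * q ^ ((l : ℤ) - j))
        = qint ((i : ℤ) - l) := by
    intro l _
    rw [qint, div_eq_inv_mul, ← zpow_add₀ q_ne_zero, ← zpow_add₀ q_ne_zero,
      show (N : ℤ) * 0 + ((i : ℤ) - (j : ℤ)) * 1 + ((j : ℤ) - l) = (i : ℤ) - l by omega,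
      show (N : ℤ) * 0 + ((i : ℤ) - (j : ℤ)) * (-1) + ((l : ℤ) - j)
        = -((i : ℤ) - l) by omega]
  rw [Finset.prod_congr rfl e1, Finset.prod_congr rfl e2]
  have hpow : q ^ (k * (2 + N))
      = q ^ (2 * k) * q ^ ((N : ℤ) * k + ((i : ℤ) - (j : ℤ)) * 0) := by
    rw [mul_zero, add_zero, ← zpow_natCast q (2 * k), ← zpow_natCast q (k * (2 + N)),
      ← zpow_add₀ q_ne_zero]
    congr 1
    push_cast
    ring
  rw [hpow, qbinom_prod, qbinom_prod]
  ring
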